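/- If C ⟂ X, then any dependence of X on Z = min(T,C) implies dependence of X on T: formally, if T ⟂ C | X, C ⟂ X, and X ⟂ T, then X ⟂ Z. -/

import Mathlib

open MeasureTheory ProbabilityTheory

/-- Justification of the zHSIC test: under censoring independent of the covariate (`C ⟂ X`) and
conditionally independent censoring (`T ⟂ C | X`), the null `X ⟂ T` implies `X ⟂ Z` where
`Z = min(T,C)`. -/
theorem indep_covariate_observed_time {Ω 𝒳 : Type*}
    [MeasurableSpace Ω] [StandardBorelSpace Ω] [MeasurableSpace 𝒳]
    (μ : Measure Ω) [IsProbabilityMeasure μ]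
    (X : Ω → 𝒳) (T C : Ω → ℝ)
    (hX : Measurable X) (hT : Measurable T) (hC : Measurable C)
    (hCX : IndepFun C X μ)
    (hTC : CondIndepFun (MeasurableSpace.comap X ‹MeasurableSpace 𝒳›) hX.comap_le T C μ)
    (hXT : IndepFun X T μ) :
    IndepFun X (fun ω => min (T ω) (C ω)) μ := by
  have hmX_le : MeasurableSpace.comap X ‹MeasurableSpace 𝒳› ≤ _ := hX.comap_le
  -- independence as sigma-algebra independence
  have hTXindep : Indep (MeasurableSpace.comap T inferInstance) (MeasurableSpace.comap X ‹MeasurableSpace 𝒳›) μ :=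
    (IndepFun_iff_Indep T X μ).mp hXT.symm
  have hCXindep : Indep (MeasurableSpace.comap C inferInstance) (MeasurableSpace.comap X ‹MeasurableSpace 𝒳›) μ :=
    (IndepFun_iff_Indep C X μ).mp hCX
  -- condexp of indicator of T ⁻¹' A given (MeasurableSpace.comap X ‹MeasurableSpace 𝒳›) is constant
  have hconst : ∀ (f : Ω → ℝ) (hf : Measurable f)
      (hind : Indep (MeasurableSpace.comap f inferInstance) (MeasurableSpace.comap X ‹MeasurableSpace 𝒳›) μ)
      (A : Set ℝ), MeasurableSet A →
      (μ⟦f ⁻¹' A | (MeasurableSpace.comap X ‹MeasurableSpace 𝒳›)⟧) =ᵐ[μ] fun _ => (μ (f ⁻¹' A)).toReal := by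
    intro f hf hind A hA
    have hsm : StronglyMeasurable[MeasurableSpace.comap f inferInstance]
        ((f ⁻¹' A).indicator (fun _ => (1 : ℝ))) :=
      stronglyMeasurable_const.indicator ⟨A, hA, rfl⟩
    have h := condExp_indep_eq hf.comap_le hmX_le hsm hind
    have hint : ∫ x, (f ⁻¹' A).indicator (fun _ => (1 : ℝ)) x ∂μ = (μ (f ⁻¹' A)).toReal :=
      integral_indicator_one (hf hA)
    refine h.trans ?_
    rw [hint]
  -- the key factorization
  have key : ∀ (u : Set 𝒳) (A B : Set ℝ), MeasurableSet u → MeasurableSet A → MeasurableSet B →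
      μ (X ⁻¹' u ∩ (T ⁻¹' A ∩ C ⁻¹' B)) = μ (X ⁻¹' u) * μ (T ⁻¹' A ∩ C ⁻¹' B) := by
    intro u A B hu hA hB
    have hS : MeasurableSet (T ⁻¹' A ∩ C ⁻¹' B) := (hT hA).inter (hC hB)
    set c : ℝ := (μ (T ⁻¹' A)).toReal * (μ (C ⁻¹' B)).toReal with hc_def
    have hcond : (μ⟦T ⁻¹' A ∩ C ⁻¹' B | (MeasurableSpace.comap X ‹MeasurableSpace 𝒳›)⟧) =ᵐ[μ] fun _ => c := by
      have h1 := (condIndepFun_iff_condExp_inter_preimage_eq_mul hT hC).mp hTC A B hA hB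
      have h2 := hconst T hT hTXindep A hA
      have h3 := hconst C hC hCXindep B hB
      filter_upwards [h1, h2, h3] with ω e1 e2 e3
      rw [e1, e2, e3]
    -- μ S = c
    have hmuS : (μ (T ⁻¹' A ∩ C ⁻¹' B)).toReal = c := by
      have hint : Integrable ((T ⁻¹' A ∩ C ⁻¹' B).indicator (fun _ => (1 : ℝ))) μ :=
        (integrable_const (1 : ℝ)).indicator hS
      have e1 : ∫ ω, (T ⁻¹' A ∩ C ⁻¹' B).indicator (fun _ => (1 : ℝ)) ω ∂μ
          = (μ (T ⁻¹' A ∩ C ⁻¹' B)).toReal := integral_indicator_one hS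
      calc (μ (T ⁻¹' A ∩ C ⁻¹' B)).toReal
          = ∫ ω, (T ⁻¹' A ∩ C ⁻¹' B).indicator (fun _ => (1 : ℝ)) ω ∂μ := e1.symm
        _ = ∫ ω, (μ⟦T ⁻¹' A ∩ C ⁻¹' B | (MeasurableSpace.comap X ‹MeasurableSpace 𝒳›)⟧) ω ∂μ := (integral_condExp hmX_le).symm
        _ = ∫ _, c ∂μ := integral_congr_ae hcond
        _ = c := by simp
    -- μ (X⁻¹u ∩ S) = μ(X⁻¹u) * c
    have hmuXS : (μ (X ⁻¹' u ∩ (T ⁻¹' A ∩ C ⁻¹' B))).toReal = (μ (X ⁻¹' u)).toReal * c := by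
      have hint : Integrable ((T ⁻¹' A ∩ C ⁻¹' B).indicator (fun _ => (1 : ℝ))) μ :=
        (integrable_const (1 : ℝ)).indicator hS
      have hXu : MeasurableSet[(MeasurableSpace.comap X ‹MeasurableSpace 𝒳›)] (X ⁻¹' u) := ⟨u, hu, rfl⟩
      have e2 : ∫ ω in X ⁻¹' u, (T ⁻¹' A ∩ C ⁻¹' B).indicator (fun _ => (1 : ℝ)) ω ∂μ
          = ((μ.restrict (X ⁻¹' u)) (T ⁻¹' A ∩ C ⁻¹' B)).toReal := integral_indicator_one hS
      calc (μ (X ⁻¹' u ∩ (T ⁻¹' A ∩ C ⁻¹' B))).toReal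
          = ∫ ω in X ⁻¹' u, (T ⁻¹' A ∩ C ⁻¹' B).indicator (fun _ => (1 : ℝ)) ω ∂μ := by
            rw [e2, Measure.restrict_apply hS, Set.inter_comm]
        _ = ∫ ω in X ⁻¹' u, (μ⟦T ⁻¹' A ∩ C ⁻¹' B | (MeasurableSpace.comap X ‹MeasurableSpace 𝒳›)⟧) ω ∂μ :=
            (setIntegral_condExp hmX_le hint hXu).symm
        _ = ∫ _ in X ⁻¹' u, c ∂μ :=
            integral_congr_ae (Filter.EventuallyEq.restrict hcond)
        _ = (μ (X ⁻¹' u)).toReal * c := by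
            rw [setIntegral_const, smul_eq_mul, measureReal_def]
    have hfin1 : μ (X ⁻¹' u ∩ (T ⁻¹' A ∩ C ⁻¹' B)) ≠ ⊤ := measure_ne_top _ _
    have hfin2 : μ (X ⁻¹' u) * μ (T ⁻¹' A ∩ C ⁻¹' B) ≠ ⊤ :=
      ENNReal.mul_ne_top (measure_ne_top _ _) (measure_ne_top _ _)
    rw [← ENNReal.toReal_eq_toReal_iff' hfin1 hfin2, ENNReal.toReal_mul, hmuXS, hmuS]
  -- independence of X and the pair (T, C)
  have hpair : IndepFun X (fun ω => (T ω, C ω)) μ := by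
    have h2 : (MeasurableSpace.comap (fun ω => (T ω, C ω)) Prod.instMeasurableSpace : MeasurableSpace Ω)
        = MeasurableSpace.generateFrom
          (Set.preimage (fun ω => (T ω, C ω)) ''
            Set.image2 (· ×ˢ ·) { s : Set ℝ | MeasurableSet s } { t : Set ℝ | MeasurableSet t }) := by
      conv_lhs => rw [← generateFrom_prod]
      rw [MeasurableSpace.comap_generateFrom]
    have h1 : (MeasurableSpace.comap X ‹MeasurableSpace 𝒳›) = MeasurableSpace.generateFrom
        (Set.preimage X '' { s : Set 𝒳 | MeasurableSet s }) := by
      conv_lhs => rw [← @MeasurableSpace.generateFrom_measurableSet 𝒳 _]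
      rw [MeasurableSpace.comap_generateFrom]
    have hindep : Indep (MeasurableSpace.comap X ‹MeasurableSpace 𝒳›)
        (MeasurableSpace.comap (fun ω => (T ω, C ω)) Prod.instMeasurableSpace) μ := by
      refine IndepSets.indep hmX_le (hT.prodMk hC).comap_le
        (MeasurableSpace.isPiSystem_measurableSet.comap X)
        (isPiSystem_prod.comap _) h1 h2 ?_
      rintro s t ⟨u, hu, rfl⟩ ⟨r, hr, rfl⟩
      rw [Set.mem_image2] at hr
      obtain ⟨A, hA, B, hB, rfl⟩ := hr
      have hpre : (fun ω => (T ω, C ω)) ⁻¹' (A ×ˢ B) = T ⁻¹' A ∩ C ⁻¹' B := rfl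
      rw [hpre]
      refine Filter.Eventually.of_forall fun a => ?_
      simpa using key u A B hu hA hB
    exact (IndepFun_iff_Indep X _ μ).mpr hindep
  exact hpair.comp measurable_id (measurable_fst.min measurable_snd)
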